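/- Let (h_n)_{n≥1} be reals with h_1 = 1 and, for 2 ≤ n ≤ N, satisfying the stationarity relation h_n = (n/(2 D_{n,N})) ∑_{m=1}^{n-1} h_m h_{n-m}, where D_{n,N} = n/4 + (2n²-n)/(4(N-1)). Then |h_n| ≤ 8^{n-1}/(2n-1) for all 1 ≤ n ≤ N. -/

import Mathlib

open Finset


lemma cat_mul_le' (k : ℕ) : (2 * k + 1) * catalan k ≤ 4 ^ k := by
  rcases k with _ | j
  · simp
  set k := j + 1 with hk
  have hsym : Nat.choose (2 * k) (k + 1) = Nat.choose (2 * k) j := by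
    apply Nat.choose_symm_of_eq_add; omega
  have hrec : Nat.choose (2 * k) (k + 1) * (k + 1) = Nat.choose (2 * k) k * k := by
    have := Nat.choose_succ_right_eq (2 * k) k
    simpa [two_mul] using this
  have hsum : Nat.choose (2 * k) j + Nat.choose (2 * k) k + Nat.choose (2 * k) (k + 1)
      ≤ 4 ^ k := by
    have htot : ∑ i ∈ range (2 * k + 1), Nat.choose (2 * k) i = 4 ^ k := by
      rw [Nat.sum_range_choose]
      rw [show (4:ℕ) = 2^2 by norm_num, ← pow_mul]
    calc Nat.choose (2 * k) j + Nat.choose (2 * k) k + Nat.choose (2 * k) (k + 1)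
        = ∑ i ∈ ({j, k, k + 1} : Finset ℕ), Nat.choose (2 * k) i := by
          rw [Finset.sum_insert (by simp only [Finset.mem_insert, Finset.mem_singleton]; omega),
            Finset.sum_insert (by simp only [Finset.mem_singleton]; omega),
            Finset.sum_singleton]; ring
      _ ≤ ∑ i ∈ range (2 * k + 1), Nat.choose (2 * k) i := by
          apply Finset.sum_le_sum_of_subset
          intro x hx; simp at hx ⊢; omega
      _ = 4 ^ k := htot
  have hkey : Nat.choose (2 * k) k + 2 * Nat.choose (2 * k) (k + 1) ≤ 4 ^ k := by
    omega
  have h31 : (3 * k + 1) * ((k + 1) * catalan k) ≤ (k + 1) * 4 ^ k := by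
    rw [succ_mul_catalan_eq_centralBinom, Nat.centralBinom]
    calc (3 * k + 1) * Nat.choose (2 * k) k
        = (k + 1) * Nat.choose (2 * k) k + 2 * (Nat.choose (2 * k) k * k) := by ring
      _ = (k + 1) * Nat.choose (2 * k) k + 2 * (Nat.choose (2 * k) (k + 1) * (k + 1)) := by
          rw [hrec]
      _ = (k + 1) * (Nat.choose (2 * k) k + 2 * Nat.choose (2 * k) (k + 1)) := by ring
      _ ≤ (k + 1) * 4 ^ k := Nat.mul_le_mul_left _ hkey
  have h2 : (k + 1) * ((2 * k + 1) * catalan k) ≤ (k + 1) * 4 ^ k := by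
    calc (k + 1) * ((2 * k + 1) * catalan k) ≤ (3 * k + 1) * ((k + 1) * catalan k) := by
          have := Nat.mul_le_mul_right ((k+1) * catalan k) (show 2*k+1 ≤ 3*k+1 by omega)
          calc (k + 1) * ((2 * k + 1) * catalan k) = (2*k+1) * ((k+1) * catalan k) := by ring
            _ ≤ _ := this
      _ ≤ _ := h31
  exact Nat.le_of_mul_le_mul_left h2 (by omega)


lemma conv_id' (k : ℕ) :
    ∑ m ∈ Ico 1 (k + 2), ((2:ℝ) ^ (m - 1) * (catalan (m - 1) : ℝ)) *
      ((2:ℝ) ^ (k + 2 - m - 1) * (catalan (k + 2 - m - 1) : ℝ))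
    = 2 ^ (k + 1) * (catalan (k + 1) : ℝ) / 2 := by
  rw [Finset.sum_Ico_eq_sum_range]
  have hn : k + 2 - 1 = k + 1 := rfl
  rw [hn]
  have hstep : ∀ i ∈ range (k + 1),
      ((2:ℝ) ^ (1 + i - 1) * (catalan (1 + i - 1) : ℝ)) *
        ((2:ℝ) ^ (k + 2 - (1 + i) - 1) * (catalan (k + 2 - (1 + i) - 1) : ℝ))
      = 2 ^ k * ((catalan i : ℝ) * (catalan (k - i) : ℝ)) := by
    intro i hi
    rw [Finset.mem_range] at hi
    have e1 : 1 + i - 1 = i := by omega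
    have e2 : k + 2 - (1 + i) - 1 = k - i := by omega
    rw [e1, e2]
    have : (2:ℝ) ^ i * 2 ^ (k - i) = 2 ^ k := by
      rw [← pow_add]; congr 1; omega
    calc ((2:ℝ) ^ i * (catalan i : ℝ)) * ((2:ℝ) ^ (k - i) * (catalan (k - i) : ℝ))
        = ((2:ℝ) ^ i * 2 ^ (k - i)) * ((catalan i : ℝ) * (catalan (k - i) : ℝ)) := by ring
      _ = _ := by rw [this]
  rw [Finset.sum_congr rfl hstep, ← Finset.mul_sum]
  have hc : (catalan (k + 1) : ℝ) = ∑ i ∈ range (k + 1), (catalan i : ℝ) * (catalan (k - i) : ℝ) := by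
    rw [catalan_succ (n := k)]
    push_cast
    rw [← Finset.sum_range fun i => (catalan i : ℝ) * (catalan (k - i) : ℝ)]
  rw [hc]
  ring

/-- The dissipation constant `D_{n,N} = n/4 + (2n² - n)/(4(N-1))`. -/
noncomputable def dissipationConst (n N : ℕ) : ℝ :=
  (n : ℝ) / 4 + (2 * (n : ℝ) ^ 2 - (n : ℝ)) / (4 * ((N : ℝ) - 1))

/-- If `h_1 = 1` and `h_n = (n/(2 D_{n,N})) ∑_{m=1}^{n-1} h_m h_{n-m}` for `2 ≤ n ≤ N`,
then `|h_n| ≤ 8^{n-1}/(2n-1)` for all `1 ≤ n ≤ N`. -/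
theorem stationary_nonrepeated_cumulant_bound (N : ℕ) (hN : 2 ≤ N)
    (h : ℕ → ℝ) (h1 : h 1 = 1)
    (hrec : ∀ n, 2 ≤ n → n ≤ N →
      h n = ((n : ℝ) / (2 * dissipationConst n N)) * ∑ m ∈ Finset.Ico 1 n, h m * h (n - m)) :
    ∀ n, 1 ≤ n → n ≤ N → |h n| ≤ (8 : ℝ) ^ (n - 1) / (2 * (n : ℝ) - 1) := by
  have hNr : (1:ℝ) ≤ (N:ℝ) - 1 := by
    have : (2:ℝ) ≤ (N:ℝ) := by exact_mod_cast hN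
    linarith
  have key : ∀ n, 1 ≤ n → n ≤ N → |h n| ≤ (2:ℝ) ^ (n - 1) * (catalan (n - 1) : ℝ) := by
    intro n
    induction n using Nat.strong_induction_on with
    | _ n ih =>
      intro h1n hnN
      rcases Nat.lt_or_ge n 2 with hn2 | hn2
      · have hne : n = 1 := by omega
        subst hne
        simp [h1]
      · obtain ⟨k, rfl⟩ : ∃ k, n = k + 2 := ⟨n - 2, by omega⟩
        have hnpos : (0:ℝ) < ((k + 2 : ℕ) : ℝ) := by positivity
        have hDlb : ((k + 2 : ℕ) : ℝ) / 4 ≤ dissipationConst (k + 2) N := by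
          unfold dissipationConst
          have hnum : (0:ℝ) ≤ 2 * ((k + 2 : ℕ) : ℝ) ^ 2 - ((k + 2 : ℕ) : ℝ) := by
            push_cast; nlinarith [sq_nonneg ((k:ℝ) + 2)]
          have hden : (0:ℝ) < 4 * ((N:ℝ) - 1) := by linarith
          have := div_nonneg hnum (le_of_lt hden)
          linarith
        have hDpos : 0 < dissipationConst (k + 2) N := lt_of_lt_of_le (by positivity) hDlb
        have hc0 : 0 ≤ ((k + 2 : ℕ) : ℝ) / (2 * dissipationConst (k + 2) N) := by positivity
        have hc2 : ((k + 2 : ℕ) : ℝ) / (2 * dissipationConst (k + 2) N) ≤ 2 := by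
          rw [div_le_iff₀ (by positivity)]
          linarith
        rw [hrec (k + 2) (by omega) hnN, abs_mul, abs_of_nonneg hc0]
        have hterm : ∀ m ∈ Ico 1 (k + 2), |h m * h (k + 2 - m)| ≤
            ((2:ℝ) ^ (m - 1) * (catalan (m - 1) : ℝ)) *
              ((2:ℝ) ^ (k + 2 - m - 1) * (catalan (k + 2 - m - 1) : ℝ)) := by
          intro m hm
          rw [Finset.mem_Ico] at hm
          rw [abs_mul]
          apply mul_le_mul
          · exact ih m (by omega) (by omega) (by omega)
          · exact ih (k + 2 - m) (by omega) (by omega) (by omega)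
          · exact abs_nonneg _
          · positivity
        have hsum : |∑ m ∈ Ico 1 (k + 2), h m * h (k + 2 - m)| ≤
            2 ^ (k + 1) * (catalan (k + 1) : ℝ) / 2 := by
          calc |∑ m ∈ Ico 1 (k + 2), h m * h (k + 2 - m)|
              ≤ ∑ m ∈ Ico 1 (k + 2), |h m * h (k + 2 - m)| := Finset.abs_sum_le_sum_abs _ _
            _ ≤ ∑ m ∈ Ico 1 (k + 2), ((2:ℝ) ^ (m - 1) * (catalan (m - 1) : ℝ)) *
                  ((2:ℝ) ^ (k + 2 - m - 1) * (catalan (k + 2 - m - 1) : ℝ)) :=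
                Finset.sum_le_sum hterm
            _ = _ := conv_id' k
        have habs : (0:ℝ) ≤ |∑ m ∈ Ico 1 (k + 2), h m * h (k + 2 - m)| := abs_nonneg _
        calc ((k + 2 : ℕ) : ℝ) / (2 * dissipationConst (k + 2) N) *
              |∑ m ∈ Ico 1 (k + 2), h m * h (k + 2 - m)|
            ≤ 2 * (2 ^ (k + 1) * (catalan (k + 1) : ℝ) / 2) := by
              apply mul_le_mul hc2 hsum habs (by norm_num)
          _ = 2 ^ (k + 2 - 1) * (catalan (k + 2 - 1) : ℝ) := by
              show (2:ℝ) * (2 ^ (k + 1) * (catalan (k + 1) : ℝ) / 2) = 2 ^ (k + 1) * (catalan (k + 1) : ℝ)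
              ring
  intro n h1n hnN
  have hb := key n h1n hnN
  have hpos : (0:ℝ) < 2 * (n:ℝ) - 1 := by
    have : (1:ℝ) ≤ (n:ℝ) := by exact_mod_cast h1n
    linarith
  rw [le_div_iff₀ hpos]
  have hcat : ((2 * (n - 1) + 1) * catalan (n - 1) : ℕ) ≤ 4 ^ (n - 1) := cat_mul_le' (n - 1)
  have hcatR : (2 * (n:ℝ) - 1) * (catalan (n - 1) : ℝ) ≤ 4 ^ (n - 1) := by
    have hle := (Nat.cast_le (α := ℝ)).2 hcat
    push_cast [Nat.cast_sub h1n] at hle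
    have e : (2 * ((n:ℝ) - 1) + 1) = 2 * (n:ℝ) - 1 := by ring
    rw [e] at hle
    exact hle
  calc |h n| * (2 * (n:ℝ) - 1) ≤ (2:ℝ) ^ (n - 1) * (catalan (n - 1) : ℝ) * (2 * (n:ℝ) - 1) := by
        apply mul_le_mul_of_nonneg_right hb (le_of_lt hpos)
    _ = (2:ℝ) ^ (n - 1) * ((2 * (n:ℝ) - 1) * (catalan (n - 1) : ℝ)) := by ring
    _ ≤ (2:ℝ) ^ (n - 1) * 4 ^ (n - 1) := by
        apply mul_le_mul_of_nonneg_left hcatR (by positivity)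
    _ = 8 ^ (n - 1) := by rw [← mul_pow]; norm_num
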